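/- Let s ∈ S_n be a score sequence maximizing G(s) = Σ β^{s_v} (β > 1) over all non-decreasing sequences with 3 ≤ s_1 ≤ ... ≤ s_n ≤ n-4 satisfying Landau's inequalities, with n ≥ 11. If some index k with s_k = s_{k+1} satisfies s_1+...+s_k = C(k,2)+1, then s_{k+1} ≤ k-1, contradicting s_1+...+s_{k+1} ≥ C(k+1,2)+1; hence no value c with 3 < c < n-4 can appear more than once in s. -/
import Mathlib


/-- A set `W` of vertices is acyclic if the digraph `r` restricted to `W`
has no directed cycle (the transitive closure restricted to `W` is irreflexive). -/
def AcyclicOn {V : Type*} (r : V → V → Prop) (W : Set V) : Prop :=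
  ∀ v : V, ¬ Relation.TransGen (fun a b => a ∈ W ∧ b ∈ W ∧ r a b) v v

/-- A tournament: an irreflexive relation with exactly one arc between
every pair of distinct vertices. -/
def IsTournament {V : Type*} (r : V → V → Prop) : Prop :=
  (∀ v : V, ¬ r v v) ∧ ∀ u v : V, u ≠ v → (r u v ↔ ¬ r v u)

/-- A feedback vertex set: its deletion leaves an acyclic digraph. -/
def IsFVS {V : Type*} (r : V → V → Prop) (F : Set V) : Prop :=
  AcyclicOn r Fᶜ

/-- A minimal feedback vertex set. -/
def IsMinimalFVS {V : Type*} (r : V → V → Prop) (F : Set V) : Prop :=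
  IsFVS r F ∧ ∀ F' : Set V, F' ⊆ F → IsFVS r F' → F' = F

/-- A feedback vertex set of the subtournament induced on `S`. -/
def IsFVSOn {V : Type*} (r : V → V → Prop) (S F : Set V) : Prop :=
  F ⊆ S ∧ AcyclicOn r (S \ F)

/-- A minimal feedback vertex set of the subtournament induced on `S`. -/
def IsMinimalFVSOn {V : Type*} (r : V → V → Prop) (S F : Set V) : Prop :=
  IsFVSOn r S F ∧ ∀ F' : Set V, F' ⊆ F → IsFVSOn r S F' → F' = F

/-- Strong (strongly connected): a directed path between any ordered pair. -/
def IsStrong {V : Type*} (r : V → V → Prop) : Prop :=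
  ∀ u v : V, Relation.ReflTransGen r u v

/-- The subtournament induced on `S` is strong. -/
def IsStrongOn {V : Type*} (r : V → V → Prop) (S : Set V) : Prop :=
  ∀ u ∈ S, ∀ v ∈ S, Relation.ReflTransGen (fun a b => a ∈ S ∧ b ∈ S ∧ r a b) u v

/-- The score (out-degree) of a vertex. -/
noncomputable def outScore {V : Type*} (r : V → V → Prop) (v : V) : ℕ :=
  {u : V | r v u}.ncard

/-- The number of minimal feedback vertex sets of a tournament. -/
noncomputable def fvsCount (V : Type*) (r : V → V → Prop) : ℕ :=
  {F : Set V | IsMinimalFVS r F}.ncard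

/-- `maxMinFVS n` = maximum number of minimal FVSs over all `n`-vertex tournaments. -/
noncomputable def maxMinFVS (n : ℕ) : ℕ :=
  sSup {k : ℕ | ∃ r : Fin n → Fin n → Prop, IsTournament r ∧ fvsCount (Fin n) r = k}


/-- Membership in `S_n`: non-decreasing integer sequences with entries between `3`
and `n-4`, satisfying Landau's strict inequalities and the total-sum condition. -/
def MemS (n : ℕ) (s : Fin n → ℕ) : Prop :=
  Monotone s ∧ (∀ i : Fin n, 3 ≤ s i ∧ s i ≤ n - 4) ∧
  (∀ k : ℕ, 1 ≤ k → k ≤ n - 1 →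
    k.choose 2 + 1 ≤ ∑ i : Fin n, if (i : ℕ) < k then s i else 0) ∧
  ((∑ i : Fin n, s i) = n.choose 2)

lemma sum_swap_pair {α : Type*} [AddCommMonoid α] {n : ℕ} (f g : Fin n → α) (i j : Fin n)
    (hij : i ≠ j) (h : ∀ v, v ≠ i → v ≠ j → f v = g v) :
    (∑ v, f v) + (g i + g j) = (∑ v, g v) + (f i + f j) := by
  classical
  have hji : j ∈ Finset.univ.erase i := Finset.mem_erase.2 ⟨Ne.symm hij, Finset.mem_univ j⟩
  have hf : (∑ v ∈ (Finset.univ.erase i).erase j, f v) + f j + f i = ∑ v, f v := by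
    rw [Finset.sum_erase_add _ _ hji, Finset.sum_erase_add _ _ (Finset.mem_univ i)]
  have hg : (∑ v ∈ (Finset.univ.erase i).erase j, g v) + g j + g i = ∑ v, g v := by
    rw [Finset.sum_erase_add _ _ hji, Finset.sum_erase_add _ _ (Finset.mem_univ i)]
  have hmid : (∑ v ∈ (Finset.univ.erase i).erase j, f v)
      = ∑ v ∈ (Finset.univ.erase i).erase j, g v := by
    refine Finset.sum_congr rfl fun v hv => ?_
    rw [Finset.mem_erase, Finset.mem_erase] at hv
    exact h v hv.2.1 hv.1
  rw [← hf, ← hg, hmid]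
  abel

lemma sum_if_succ {n : ℕ} {α : Type*} [AddCommMonoid α] (f : Fin n → α) (m : ℕ) (hm : m < n) :
    (∑ v : Fin n, if (v : ℕ) < m + 1 then f v else 0)
      = (∑ v : Fin n, if (v : ℕ) < m then f v else 0) + f ⟨m, hm⟩ := by
  classical
  have hpt : ∀ v : Fin n, (if (v : ℕ) < m + 1 then f v else 0)
      = (if (v : ℕ) < m then f v else 0) + (if v = ⟨m, hm⟩ then f v else 0) := by
    intro v
    by_cases hv : v = ⟨m, hm⟩
    · subst hv; simp
    · have hv' : (v : ℕ) ≠ m := fun h => hv (Fin.ext h)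
      have h1 : ((v : ℕ) < m + 1) ↔ ((v : ℕ) < m) := by omega
      simp [hv, h1]
  rw [Finset.sum_congr rfl fun v _ => hpt v, Finset.sum_add_distrib,
    Finset.sum_ite_eq' Finset.univ (⟨m, hm⟩ : Fin n) f, if_pos (Finset.mem_univ _)]

lemma choose_two_succ (m : ℕ) : (m + 1).choose 2 = m.choose 2 + m := by
  have h := Nat.choose_succ_succ m 1
  simpa [Nat.choose_one_right, Nat.add_comm] using h

lemma sum_if_all {n : ℕ} (f : Fin n → ℕ) :
    (∑ v : Fin n, if (v : ℕ) < n then f v else 0) = ∑ v : Fin n, f v :=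
  Finset.sum_congr rfl fun v _ => if_pos v.isLt

/-- A maximizer of `G(s) = Σ β^(s_v)` (with `β > 1`) over `S_n`, `n ≥ 11`, has no
repeated value strictly between `3` and `n - 4`. -/
theorem stmt18 (n : ℕ) (hn : 11 ≤ n) (β : ℝ) (hβ : 1 < β)
    (s : Fin n → ℕ) (hs : MemS n s)
    (hmax : ∀ s' : Fin n → ℕ, MemS n s' →
      (∑ i : Fin n, β ^ (s' i)) ≤ ∑ i : Fin n, β ^ (s i)) :
    ∀ c : ℕ, 3 < c → c < n - 4 → ({i : Fin n | s i = c}).ncard ≤ 1 := by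
  intro c hc1 hc2
  by_contra hcon
  push_neg at hcon
  obtain ⟨hmono, hbound, hlandau, htotal⟩ := hs
  set T : Finset (Fin n) := Finset.univ.filter (fun v => s v = c) with hT
  have hsetT : {i : Fin n | s i = c} = (T : Set (Fin n)) := by
    ext v; simp [hT]
  rw [hsetT, Set.ncard_coe_finset] at hcon
  have hT0 : T.Nonempty := Finset.card_pos.1 (by omega)
  set i := T.min' hT0 with hi
  set j := T.max' hT0 with hj
  have hij : i < j := T.min'_lt_max'_of_card hcon
  have hijn : (i : ℕ) < (j : ℕ) := hij
  have hsi : s i = c := (Finset.mem_filter.1 (T.min'_mem hT0)).2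
  have hsj : s j = c := (Finset.mem_filter.1 (T.max'_mem hT0)).2
  have hjn : (j : ℕ) ≤ n - 1 := by have := j.isLt; omega
  -- squeeze facts
  have hmid : ∀ v : Fin n, i ≤ v → v ≤ j → s v = c := fun v h1 h2 =>
    le_antisymm (hsj ▸ hmono h2) (hsi ▸ hmono h1)
  have hlow : ∀ v : Fin n, v < i → s v < c := by
    intro v hv
    refine lt_of_le_of_ne (hsi ▸ hmono hv.le) fun hvc => ?_
    exact absurd (T.min'_le v (Finset.mem_filter.2 ⟨Finset.mem_univ v, hvc⟩)) (not_le.2 hv)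
  have hhigh : ∀ v : Fin n, j < v → c < s v := by
    intro v hv
    refine lt_of_le_of_ne (hsj ▸ hmono hv.le) fun hvc => ?_
    exact absurd (T.le_max' v (Finset.mem_filter.2 ⟨Finset.mem_univ v, hvc.symm⟩)) (not_le.2 hv)
  -- the perturbed sequence
  obtain ⟨s', hs'i, hs'j, hs'o⟩ : ∃ t : Fin n → ℕ,
      t i = c - 1 ∧ t j = c + 1 ∧ ∀ v, v ≠ i → v ≠ j → t v = s v :=
    ⟨fun v => if v = i then c - 1 else if v = j then c + 1 else s v,
      by simp, by simp [hij.ne'], fun v h1 h2 => by simp [h1, h2]⟩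
  -- key exchange identity for prefix sums
  have key : ∀ k : ℕ,
      (∑ v : Fin n, if (v : ℕ) < k then s' v else 0)
        + ((if (i : ℕ) < k then s i else 0) + (if (j : ℕ) < k then s j else 0))
      = (∑ v : Fin n, if (v : ℕ) < k then s v else 0)
        + ((if (i : ℕ) < k then s' i else 0) + (if (j : ℕ) < k then s' j else 0)) := by
    intro k
    exact sum_swap_pair (fun v => if (v : ℕ) < k then s' v else 0)
      (fun v => if (v : ℕ) < k then s v else 0) i j hij.ne
      (fun v h1 h2 => by
        show (if (v : ℕ) < k then s' v else 0) = (if (v : ℕ) < k then s v else 0)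
        rw [hs'o v h1 h2])
  have keyA : ∀ k : ℕ, ¬((i : ℕ) < k ∧ k ≤ (j : ℕ)) →
      (∑ v : Fin n, if (v : ℕ) < k then s' v else 0)
        = ∑ v : Fin n, if (v : ℕ) < k then s v else 0 := by
    intro k hk
    have h := key k
    split_ifs at h <;> omega
  have keyB : ∀ k : ℕ, (i : ℕ) < k → k ≤ (j : ℕ) →
      (∑ v : Fin n, if (v : ℕ) < k then s' v else 0) + 1
        = ∑ v : Fin n, if (v : ℕ) < k then s v else 0 := by
    intro k hk1 hk2
    have h := key k
    split_ifs at h <;> omega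
  -- strict Landau inequality inside the constant block
  have hstrict : ∀ k : ℕ, (i : ℕ) < k → k ≤ (j : ℕ) →
      k.choose 2 + 2 ≤ ∑ v : Fin n, if (v : ℕ) < k then s v else 0 := by
    intro k hik hkj
    have hL := hlandau k (by omega) (by omega)
    by_contra hlt
    push_neg at hlt
    have heq : (∑ v : Fin n, if (v : ℕ) < k then s v else 0) = k.choose 2 + 1 := by omega
    obtain ⟨m, rfl⟩ : ∃ m, k = m + 1 := ⟨k - 1, by omega⟩
    have hmn : m < n := by omega
    have hsm : s ⟨m, hmn⟩ = c := by
      refine hmid _ (Fin.le_def.mpr ?_) (Fin.le_def.mpr ?_) <;> simp <;> omega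
    have e1 : (∑ v : Fin n, if (v : ℕ) < m + 1 then s v else 0)
        = (∑ v : Fin n, if (v : ℕ) < m then s v else 0) + c := by
      rw [sum_if_succ s m hmn, hsm]
    have hch1 : (m + 1).choose 2 = m.choose 2 + m := choose_two_succ m
    rcases Nat.eq_zero_or_pos m with hm0 | hm1
    · -- m = 0 : first entry would be 1
      subst hm0
      have h0 : (∑ v : Fin n, if (v : ℕ) < 0 then s v else 0) = 0 := by simp
      rw [e1, h0] at heq
      have hch0 : (0 + 1).choose 2 = 0 := rfl
      omega
    · have hLm := hlandau m hm1 (by omega)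
      have hcle : c ≤ m := by omega
      have hm1n : m + 1 < n := by omega
      have hsm1 : s ⟨m + 1, hm1n⟩ = c := by
        refine hmid _ (Fin.le_def.mpr ?_) (Fin.le_def.mpr ?_) <;> simp <;> omega
      have e2 : (∑ v : Fin n, if (v : ℕ) < m + 2 then s v else 0)
          = (∑ v : Fin n, if (v : ℕ) < m + 1 then s v else 0) + c := by
        rw [show m + 2 = (m + 1) + 1 from rfl, sum_if_succ s (m + 1) hm1n, hsm1]
      have hch2 : (m + 2).choose 2 = m.choose 2 + m + (m + 1) := by
        have h2 := choose_two_succ (m + 1)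
        rw [hch1] at h2
        exact h2
      rcases Nat.lt_or_ge (m + 1) (n - 1) with hsmall | hbig
      · -- interior case : Landau at m+2 fails
        have hL2 := hlandau (m + 2) (by omega) (by omega)
        omega
      · -- m + 1 = n - 1 : use the total sum
        have hmn1 : m + 2 = n := by omega
        have htot2 : (∑ v : Fin n, if (v : ℕ) < m + 2 then s v else 0) = n.choose 2 := by
          rw [hmn1, sum_if_all, htotal]
        have hchn : n.choose 2 = m.choose 2 + m + (m + 1) := by rw [← hmn1]; exact hch2
        omega
  -- the perturbed sequence is in S_n
  have hs'mem : MemS n s' := by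
    refine ⟨?_, ?_, ?_, ?_⟩
    · -- monotone
      intro a b hab
      by_cases hai : a = i
      · rw [hai, hs'i]
        by_cases hbi : b = i
        · rw [hbi, hs'i]
        · by_cases hbj : b = j
          · rw [hbj, hs'j]; omega
          · rw [hs'o b hbi hbj]
            have hib : i ≤ b := by rw [← hai]; exact hab
            have h := hmono hib
            rw [hsi] at h
            omega
      · by_cases haj : a = j
        · rw [haj, hs'j]
          have hjb : j ≤ b := by rw [← haj]; exact hab
          by_cases hbi : b = i
          · exfalso; rw [hbi] at hjb; exact absurd (Fin.le_def.mp hjb) (by omega)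
          · by_cases hbj : b = j
            · rw [hbj, hs'j]
            · have hjb' : j < b := lt_of_le_of_ne hjb (Ne.symm hbj)
              rw [hs'o b hbi hbj]
              have := hhigh b hjb'
              omega
        · rw [hs'o a hai haj]
          by_cases hbi : b = i
          · have hab' : a < i := by
              refine lt_of_le_of_ne ?_ hai
              rw [← hbi]; exact hab
            have := hlow a hab'
            rw [hbi, hs'i]; omega
          · by_cases hbj : b = j
            · have h := hmono hab
              rw [hbj] at h ⊢
              rw [hsj] at h
              rw [hs'j]; omega
            · rw [hs'o b hbi hbj]; exact hmono hab
    · -- bounds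
      intro v
      by_cases hvi : v = i
      · subst hvi; rw [hs'i]; omega
      · by_cases hvj : v = j
        · subst hvj; rw [hs'j]; omega
        · rw [hs'o v hvi hvj]; exact hbound v
    · -- Landau
      intro k hk1 hk2
      by_cases hik : (i : ℕ) < k ∧ k ≤ (j : ℕ)
      · have h1 := keyB k hik.1 hik.2
        have h2 := hstrict k hik.1 hik.2
        omega
      · rw [keyA k hik]
        exact hlandau k hk1 hk2
    · -- total
      have h1 : ¬((i : ℕ) < n ∧ n ≤ (j : ℕ)) := by
        have := j.isLt; omega
      have := keyA n h1
      rw [sum_if_all, sum_if_all] at this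
      rw [this, htotal]
  -- strict improvement of G
  have hR : (∑ v : Fin n, β ^ s' v) + (β ^ s i + β ^ s j)
      = (∑ v : Fin n, β ^ s v) + (β ^ s' i + β ^ s' j) :=
    sum_swap_pair (fun v => β ^ s' v) (fun v => β ^ s v) i j hij.ne
      (fun v h1 h2 => by
        show β ^ s' v = β ^ s v
        rw [hs'o v h1 h2])
  rw [hsi, hsj, hs'i, hs'j] at hR
  have hineq : β ^ c + β ^ c < β ^ (c - 1) + β ^ (c + 1) := by
    obtain ⟨d, rfl⟩ : ∃ d, c = d + 1 := ⟨c - 1, by omega⟩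
    simp only [Nat.add_sub_cancel]
    have h0 : (0 : ℝ) < β := lt_trans one_pos hβ
    have hp : (0 : ℝ) < β ^ d := pow_pos h0 d
    have e1 : β ^ (d + 1) = β ^ d * β := pow_succ β d
    have e2 : β ^ (d + 1 + 1) = β ^ d * β * β := by rw [pow_succ, pow_succ]
    rw [e1, e2]
    nlinarith [mul_pos hp (mul_pos (sub_pos.2 hβ) (sub_pos.2 hβ))]
  have hle := hmax s' hs'mem
  linarith
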